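/- Let X be a complex Banach lattice that is q-concave with constant 1 for some q ∈ [1,∞), and let T : X → X be a positive bounded operator with ‖e^{nT}‖ ≤ K_s e^n for all n ∈ ℕ. Then for every n ≥ 100 and x ≥ 0 in X, (Σ_{n-√n ≤ k ≤ n} ‖T^k x‖^q)^{1/q} ≤ 28 K_s √n ‖x‖. -/

import Mathlib

open scoped BigOperators

section Aux

/-- In a normed lattice group with a real module structure, nonneg scalar times nonneg
vector is nonneg (via dyadic approximation and closedness of the positive cone). -/
lemma aux_smul_nonneg {X : Type*} [NormedAddCommGroup X] [Lattice X] [HasSolidNorm X]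
    [IsOrderedAddMonoid X] [NormedSpace ℝ X]
    {c : ℝ} (hc : 0 ≤ c) {v : X} (hv : 0 ≤ v) : 0 ≤ c • v := by
  -- dyadic: (p / 2^j : ℝ) • v ≥ 0
  have hdy : ∀ (p j : ℕ), 0 ≤ ((p : ℝ) / 2 ^ j) • v := by
    intro p j
    induction j with
    | zero => simpa [Nat.cast_smul_eq_nsmul ℝ] using nsmul_nonneg hv p
    | succ j ih =>
      -- ∀ p, statement; but ih is for the same p. Need cancellation instead.
      apply nsmul_two_semiclosed
      have : (2 : ℕ) • (((p : ℝ) / 2 ^ (j+1)) • v) = ((p : ℝ) / 2 ^ j) • v := by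
        rw [← Nat.cast_smul_eq_nsmul ℝ, smul_smul]
        congr 1
        push_cast
        ring
      rw [this]
      exact ih
  -- approximate c from above by dyadics
  have htend : Filter.Tendsto (fun j : ℕ => ((⌈c * 2 ^ j⌉₊ : ℝ) / 2 ^ j) • v)
      Filter.atTop (nhds (c • v)) := by
    have h1 : Filter.Tendsto (fun j : ℕ => ((⌈c * 2 ^ j⌉₊ : ℝ) / 2 ^ j))
        Filter.atTop (nhds c) := by
      have hlow : ∀ j : ℕ, c ≤ ((⌈c * 2 ^ j⌉₊ : ℝ) / 2 ^ j) := by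
        intro j
        rw [le_div_iff₀ (by positivity)]
        exact Nat.le_ceil _
      have hup : ∀ j : ℕ, ((⌈c * 2 ^ j⌉₊ : ℝ) / 2 ^ j) ≤ c + (1/2) ^ j := by
        intro j
        rw [div_le_iff₀ (by positivity)]
        have := (Nat.ceil_lt_add_one (by positivity : (0:ℝ) ≤ c * 2 ^ j)).le
        calc (⌈c * 2 ^ j⌉₊ : ℝ) ≤ c * 2 ^ j + 1 := this
          _ = (c + (1/2)^j) * 2 ^ j := by
              rw [add_mul]
              congr 1
              rw [div_pow, one_pow, div_mul_cancel₀]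
              positivity
      have hc2 : Filter.Tendsto (fun j : ℕ => c + (1/2:ℝ) ^ j) Filter.atTop (nhds c) := by
        have := tendsto_pow_atTop_nhds_zero_of_lt_one (by norm_num : (0:ℝ) ≤ 1/2)
          (by norm_num : (1/2:ℝ) < 1)
        simpa using (tendsto_const_nhds.add this)
      exact tendsto_of_tendsto_of_tendsto_of_le_of_le tendsto_const_nhds hc2 hlow hup
    exact h1.smul_const v
  refine ge_of_tendsto htend ?_
  filter_upwards with j using hdy _ j

set_option maxHeartbeats 1000000 in
/-- Stirling upper bound: `n! ≤ e · √n · (n/e)^n` for `n ≥ 1`. -/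
lemma aux_factorial_le (n : ℕ) (hn : 1 ≤ n) :
    (n.factorial : ℝ) ≤ Real.exp 1 * Real.sqrt n * ((n : ℝ) / Real.exp 1) ^ n := by
  obtain ⟨m, rfl⟩ : ∃ m, n = m + 1 := ⟨n - 1, by omega⟩
  have h1 : Stirling.stirlingSeq (m + 1) ≤ Stirling.stirlingSeq 1 :=
    Stirling.stirlingSeq'_antitone (Nat.zero_le m)
  rw [Stirling.stirlingSeq_one] at h1
  unfold Stirling.stirlingSeq at h1
  have hnpos : (0:ℝ) < (m + 1 : ℕ) := by positivity
  have hpos : 0 < Real.sqrt (2 * (m+1 : ℕ)) * (((m+1 : ℕ) : ℝ) / Real.exp 1) ^ (m+1) := by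
    have := Real.exp_pos 1
    positivity
  rw [div_le_iff₀ hpos] at h1
  have hsq : Real.sqrt (2 * ((m+1 : ℕ) : ℝ)) = Real.sqrt 2 * Real.sqrt ((m+1 : ℕ) : ℝ) :=
    Real.sqrt_mul (by norm_num) _
  have h2 : (0:ℝ) < Real.sqrt 2 := by positivity
  calc ((m+1).factorial : ℝ)
      ≤ Real.exp 1 / Real.sqrt 2 *
        (Real.sqrt (2 * (m+1 : ℕ)) * (((m+1 : ℕ) : ℝ) / Real.exp 1) ^ (m+1)) := h1
    _ = Real.exp 1 * Real.sqrt ((m+1 : ℕ) : ℝ) * (((m+1 : ℕ) : ℝ) / Real.exp 1) ^ (m+1) := by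
        rw [hsq]
        field_simp

set_option maxHeartbeats 1000000 in
/-- Lemma A.1 : for `n ≥ 100` and `n - √n ≤ k ≤ n`, `e^n ≤ 28 √n · n^k/k!`. -/
lemma aux_keyA1 (n k : ℕ) (hn : 100 ≤ n) (hk1 : (n:ℝ) - Real.sqrt n ≤ k) (hk2 : k ≤ n) :
    Real.exp n ≤ 28 * Real.sqrt n * ((n:ℝ) ^ k / k.factorial) := by
  set s := Real.sqrt n with hs
  have hn0 : (0:ℝ) < n := by positivity
  have hs0 : (0:ℝ) ≤ s := Real.sqrt_nonneg _
  have hs2 : s * s = n := Real.mul_self_sqrt hn0.le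
  have hn100 : (100:ℝ) ≤ n := by exact_mod_cast hn
  have hs10 : 10 ≤ s := by nlinarith
  have hsn : s ≤ n := by nlinarith
  set m := n - k with hm
  have hmk : k + m = n := by omega
  have hmcast : (m:ℝ) = (n:ℝ) - k := by
    rw [hm, Nat.cast_sub hk2]
  have hm_le : (m:ℝ) ≤ s := by rw [hmcast]; linarith
  have hnk0 : (0:ℝ) ≤ (n:ℝ) - s := by linarith
  have hkf0 : (0:ℝ) < k.factorial := by exact_mod_cast k.factorial_pos
  -- Step A: k! (n-s)^m ≤ n!
  have hA : (k.factorial : ℝ) * ((n:ℝ) - s) ^ m ≤ (n.factorial : ℝ) := by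
    have h := Nat.factorial_mul_pow_le_factorial (m := k) (n := m)
    rw [hmk] at h
    have h' : (k.factorial : ℝ) * ((k:ℝ) + 1) ^ m ≤ (n.factorial : ℝ) := by exact_mod_cast h
    refine le_trans ?_ h'
    apply mul_le_mul_of_nonneg_left (pow_le_pow_left₀ hnk0 (by linarith) m) hkf0.le
  -- Stirling
  have hB := aux_factorial_le n (by omega)
  rw [← hs] at hB
  -- 1 - 1/s ≥ exp(-10/(9s)) ≥ ...
  set t := 1 / s with ht
  have ht0 : 0 < t := by rw [ht]; positivity
  have ht10 : t ≤ 1 / 10 := by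
    rw [ht, div_le_div_iff₀ (by linarith) (by norm_num)]
    linarith
  have h1t : 0 < 1 - t := by linarith
  have hstep : Real.exp (-(10 * t / 9)) ≤ 1 - t := by
    have ha : 10 * t / 9 + 1 ≤ Real.exp (10 * t / 9) := Real.add_one_le_exp _
    have hb : 1 / (1 - t) ≤ 1 + 10 * t / 9 := by
      rw [div_le_iff₀ h1t]; nlinarith
    have hb' : 1 / (1 - t) ≤ Real.exp (10 * t / 9) := by linarith
    rw [Real.exp_neg]
    have h0 : 0 < 1 / (1 - t) := by positivity
    calc (Real.exp (10 * t / 9))⁻¹ ≤ (1 / (1 - t))⁻¹ := by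
          apply inv_anti₀ h0 hb'
      _ = 1 - t := by rw [one_div, inv_inv]
  -- c1 : exp(-2) * n^m ≤ (n-s)^m
  have hmt : (m:ℝ) * t ≤ 1 := by
    rw [ht]
    calc (m:ℝ) * (1/s) ≤ s * (1/s) := by
          apply mul_le_mul_of_nonneg_right hm_le (by positivity)
      _ = 1 := by field_simp
  have hexp2 : Real.exp (-2) ≤ Real.exp (-(10 * t / 9)) ^ m := by
    rw [← Real.exp_nat_mul]
    apply Real.exp_le_exp.mpr
    nlinarith
  have hpow : Real.exp (-(10 * t / 9)) ^ m ≤ (1 - t) ^ m :=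
    pow_le_pow_left₀ (Real.exp_nonneg _) hstep m
  have honet : (1 - t) * n = (n:ℝ) - s := by
    rw [ht]
    have : (1 - 1/s) * (s * s) = s * s - s := by field_simp
    rw [← hs2]; linarith [this]
  have c1 : Real.exp (-2) * (n:ℝ) ^ m ≤ ((n:ℝ) - s) ^ m := by
    calc Real.exp (-2) * (n:ℝ) ^ m ≤ (1 - t) ^ m * (n:ℝ) ^ m := by
          apply mul_le_mul_of_nonneg_right (hexp2.trans hpow) (by positivity)
      _ = ((1 - t) * n) ^ m := (mul_pow _ _ _).symm
      _ = ((n:ℝ) - s) ^ m := by rw [honet]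
  -- combine
  have hen : (0:ℝ) < Real.exp n := Real.exp_pos _
  have hnm : (0:ℝ) < (n:ℝ) ^ m := by positivity
  have hBpow : ((n:ℝ) / Real.exp 1) ^ n = (n:ℝ) ^ k * (n:ℝ) ^ m / Real.exp 1 ^ n := by
    rw [div_pow, ← pow_add, hmk]
  have c2 : (k.factorial : ℝ) * (Real.exp (-2) * (n:ℝ) ^ m) ≤
      Real.exp 1 * s * ((n:ℝ) ^ k * (n:ℝ) ^ m / Real.exp 1 ^ n) := by
    calc (k.factorial : ℝ) * (Real.exp (-2) * (n:ℝ) ^ m)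
        ≤ (k.factorial : ℝ) * ((n:ℝ) - s) ^ m := mul_le_mul_of_nonneg_left c1 hkf0.le
      _ ≤ (n.factorial : ℝ) := hA
      _ ≤ Real.exp 1 * s * ((n:ℝ) / Real.exp 1) ^ n := hB
      _ = Real.exp 1 * s * ((n:ℝ) ^ k * (n:ℝ) ^ m / Real.exp 1 ^ n) := by rw [hBpow]
  have hexppow : Real.exp 1 ^ n = Real.exp n := by
    rw [← Real.exp_nat_mul]; simp
  -- from c2, multiply by e^n and divide by n^m
  have c3 : (k.factorial : ℝ) * Real.exp (-2) * Real.exp n * (n:ℝ) ^ m ≤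
      Real.exp 1 * s * (n:ℝ) ^ k * (n:ℝ) ^ m := by
    have h := mul_le_mul_of_nonneg_right c2 hen.le
    rw [hexppow] at h
    calc (k.factorial : ℝ) * Real.exp (-2) * Real.exp n * (n:ℝ) ^ m
        = (k.factorial : ℝ) * (Real.exp (-2) * (n:ℝ) ^ m) * Real.exp n := by ring
      _ ≤ Real.exp 1 * s * ((n:ℝ) ^ k * (n:ℝ) ^ m / Real.exp n) * Real.exp n := h
      _ = Real.exp 1 * s * (n:ℝ) ^ k * (n:ℝ) ^ m := by
          field_simp
  have c4 : (k.factorial : ℝ) * Real.exp (-2) * Real.exp n ≤ Real.exp 1 * s * (n:ℝ) ^ k :=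
    le_of_mul_le_mul_right c3 hnm
  -- e^3 ≤ 28
  have he3 : Real.exp 1 ^ 3 ≤ 28 := by
    have h := Real.exp_one_lt_d9
    calc Real.exp 1 ^ 3 ≤ 2.7182818286 ^ 3 :=
          pow_le_pow_left₀ (Real.exp_pos 1).le h.le 3
      _ ≤ 28 := by norm_num
  have he2 : Real.exp (-2) * Real.exp 2 = 1 := by
    rw [← Real.exp_add]; norm_num
  have he12 : Real.exp 1 * Real.exp 2 = Real.exp 1 ^ 3 := by
    rw [← Real.exp_add]
    rw [show (1:ℝ) + 2 = 3 by norm_num]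
    rw [← Real.exp_nat_mul]
    norm_num
  -- final: e^n * k! ≤ 28 * s * n^k
  have hfin : Real.exp n * (k.factorial : ℝ) ≤ 28 * s * (n:ℝ) ^ k := by
    have h := mul_le_mul_of_nonneg_right c4 (Real.exp_pos 2).le
    have hnk : (0:ℝ) ≤ (n:ℝ) ^ k := by positivity
    nlinarith [h, mul_nonneg hs0 hnk]
  rw [mul_div_assoc']
  rw [le_div_iff₀ hkf0]
  linarith [hfin]

end Aux

set_option maxHeartbeats 1000000 in
set_option synthInstance.maxHeartbeats 1000000 in
/-- Let `X` be a Banach lattice which is `q`-concave with constant `1` (here expressed, via the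
Krivine calculus and the lattice inequality `(Σ|f_i|^q)^{1/q} ≤ Σ f_i` for positive `f_i`,
through the estimate `hconc` for positive families), and let `T` be a positive operator with
`‖e^{nT}‖ ≤ Ks·eⁿ` for all `n`. Then for `n ≥ 100` and `x ≥ 0`,
`(Σ_{n-√n ≤ k ≤ n} ‖T^k x‖^q)^{1/q} ≤ 28·Ks·√n·‖x‖`. -/
theorem positive_strongly_kreiss_block_bound
    {X : Type*} [NormedAddCommGroup X] [Lattice X] [HasSolidNorm X] [IsOrderedAddMonoid X]
    [NormedSpace ℝ X] [CompleteSpace X]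
    (q : ℝ) (hq : 1 ≤ q)
    (hconc : ∀ (m : ℕ) (f : ℕ → X), (∀ i, 0 ≤ f i) →
      (∑ i ∈ Finset.range m, ‖f i‖ ^ q) ^ (1/q) ≤ ‖∑ i ∈ Finset.range m, f i‖)
    (T : X →L[ℝ] X) (hTpos : ∀ x : X, 0 ≤ x → 0 ≤ T x)
    (Ks : ℝ)
    (hexp : ∀ n : ℕ, ‖NormedSpace.exp ((n : ℝ) • T)‖ ≤ Ks * Real.exp n) :
    ∀ n : ℕ, 100 ≤ n → ∀ x : X, 0 ≤ x →
      (∑ k ∈ Finset.Icc ⌈(n : ℝ) - Real.sqrt n⌉₊ n, ‖(T ^ k) x‖ ^ q) ^ (1/q) ≤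
        28 * Ks * Real.sqrt n * ‖x‖ := by
  intro n hn x hx
  have hq0 : (0:ℝ) < q := by linarith
  have hq0' : q ≠ 0 := ne_of_gt hq0
  set s := Real.sqrt n with hs
  have hn0 : (0:ℝ) < n := by positivity
  have hs2 : s * s = n := Real.mul_self_sqrt hn0.le
  have hn100 : (100:ℝ) ≤ n := by exact_mod_cast hn
  have hs10 : (10:ℝ) ≤ s := by nlinarith [Real.sqrt_nonneg (n:ℝ)]
  have hs0 : (0:ℝ) < s := by linarith
  set a := ⌈(n : ℝ) - s⌉₊ with ha
  have haIcc : Finset.Icc a n ⊆ Finset.range (n+1) := by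
    intro k hk
    rw [Finset.mem_Icc] at hk
    rw [Finset.mem_range]
    omega
  -- positivity of T^k x
  have hTk : ∀ k : ℕ, 0 ≤ (T ^ k) x := by
    intro k
    induction k with
    | zero => simpa using hx
    | succ k ih =>
      rw [pow_succ']
      rw [ContinuousLinearMap.mul_apply]
      exact hTpos _ ih
  set c : ℕ → ℝ := fun k => (n:ℝ) ^ k / k.factorial with hc
  have hc0 : ∀ k, 0 ≤ c k := by
    intro k
    rw [hc]
    positivity
  set f : ℕ → X := fun k => if k ∈ Finset.Icc a n then c k • (T ^ k) x else 0 with hf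
  have hf0 : ∀ k, 0 ≤ f k := by
    intro k
    rw [hf]
    dsimp only
    split
    · exact aux_smul_nonneg (hc0 k) (hTk k)
    · exact le_refl 0
  -- sum of f over range equals sum over Icc
  have hsum_eq : ∑ i ∈ Finset.range (n+1), f i = ∑ k ∈ Finset.Icc a n, c k • (T ^ k) x := by
    rw [Finset.sum_ite_mem, Finset.inter_eq_right.mpr haIcc]
  -- exp applied
  set A := (n : ℝ) • T with hA
  have hsummable : Summable (fun k : ℕ => (k.factorial : ℝ)⁻¹ • A ^ k) :=
    NormedSpace.expSeries_summable' A
  have happterm : ∀ k : ℕ, ((k.factorial : ℝ)⁻¹ • A ^ k) x = c k • (T ^ k) x := by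
    intro k
    rw [hA, smul_pow]
    rw [ContinuousLinearMap.smul_apply, ContinuousLinearMap.smul_apply]
    rw [smul_smul]
    congr 1
    simp [hc, div_eq_mul_inv, mul_comm]
  have happ : NormedSpace.exp A x = ∑' k : ℕ, c k • (T ^ k) x := by
    rw [NormedSpace.exp_eq_tsum ℝ]
    have := (ContinuousLinearMap.apply ℝ X x).map_tsum hsummable
    simp only [ContinuousLinearMap.apply_apply] at this
    rw [this]
    exact tsum_congr happterm
  have hsummable2 : Summable (fun k : ℕ => c k • (T ^ k) x) := by
    have := ((ContinuousLinearMap.apply ℝ X x).summable hsummable)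
    simp only [ContinuousLinearMap.apply_apply] at this
    exact this.congr happterm
  have hle : ∑ k ∈ Finset.Icc a n, c k • (T ^ k) x ≤ NormedSpace.exp A x := by
    rw [happ]
    exact Summable.sum_le_tsum _ (fun k _ => aux_smul_nonneg (hc0 k) (hTk k)) hsummable2
  have hsumpos : 0 ≤ ∑ k ∈ Finset.Icc a n, c k • (T ^ k) x :=
    Finset.sum_nonneg fun k _ => aux_smul_nonneg (hc0 k) (hTk k)
  -- norm bound
  have hnorm : ‖∑ i ∈ Finset.range (n+1), f i‖ ≤ Ks * Real.exp n * ‖x‖ := by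
    rw [hsum_eq]
    have h1 : ‖∑ k ∈ Finset.Icc a n, c k • (T ^ k) x‖ ≤ ‖NormedSpace.exp A x‖ := by
      apply HasSolidNorm.solid
      rw [abs_of_nonneg hsumpos, abs_of_nonneg (hsumpos.trans hle)]
      exact hle
    refine h1.trans ?_
    calc ‖NormedSpace.exp A x‖ ≤ ‖NormedSpace.exp A‖ * ‖x‖ :=
          ContinuousLinearMap.le_opNorm _ _
      _ ≤ Ks * Real.exp n * ‖x‖ :=
          mul_le_mul_of_nonneg_right (hexp n) (norm_nonneg x)
  -- concavity estimate
  have hconc' := hconc (n+1) f hf0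
  -- lower bound on each term
  set d := Real.exp n / (28 * s) with hd
  have hd0 : 0 < d := by rw [hd]; positivity
  have hterm : ∀ k ∈ Finset.Icc a n, d ^ q * ‖(T ^ k) x‖ ^ q ≤ ‖f k‖ ^ q := by
    intro k hk
    have hk' := hk
    rw [Finset.mem_Icc] at hk'
    have hk1 : (n:ℝ) - s ≤ k := by
      calc (n:ℝ) - s ≤ (⌈(n : ℝ) - s⌉₊ : ℝ) := Nat.le_ceil _
        _ ≤ k := by exact_mod_cast hk'.1
    have hkey := aux_keyA1 n k hn hk1 hk'.2
    have hdc : d ≤ c k := by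
      rw [hd, div_le_iff₀ (by positivity)]
      rw [hc]
      calc Real.exp n ≤ 28 * s * ((n:ℝ) ^ k / k.factorial) := hkey
        _ = (n:ℝ) ^ k / k.factorial * (28 * s) := by ring
    have hfk : f k = c k • (T ^ k) x := by rw [hf]; simp [hk]
    rw [hfk, norm_smul, Real.norm_eq_abs, abs_of_nonneg (hc0 k)]
    rw [← Real.mul_rpow hd0.le (norm_nonneg _)]
    apply Real.rpow_le_rpow (by positivity)
      (mul_le_mul_of_nonneg_right hdc (norm_nonneg _)) hq0.le
  -- sum lower bound
  have hsum_lb : d ^ q * ∑ k ∈ Finset.Icc a n, ‖(T ^ k) x‖ ^ q ≤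
      ∑ i ∈ Finset.range (n+1), ‖f i‖ ^ q := by
    rw [Finset.mul_sum]
    calc ∑ k ∈ Finset.Icc a n, d ^ q * ‖(T ^ k) x‖ ^ q
        ≤ ∑ k ∈ Finset.Icc a n, ‖f k‖ ^ q := Finset.sum_le_sum hterm
      _ = ∑ i ∈ Finset.range (n+1), ‖f i‖ ^ q := by
          apply Finset.sum_subset haIcc
          intro i _ hi
          rw [hf]
          simp only [hi, if_false]
          rw [norm_zero, Real.zero_rpow hq0']
  set S := ∑ k ∈ Finset.Icc a n, ‖(T ^ k) x‖ ^ q with hS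
  have hS0 : 0 ≤ S := Finset.sum_nonneg fun k _ => Real.rpow_nonneg (norm_nonneg _) q
  -- rpow algebra
  have hkey2 : d * S ^ (1/q) ≤ Ks * Real.exp n * ‖x‖ := by
    have h1 : (d ^ q) ^ (1/q) = d := by
      rw [← Real.rpow_mul hd0.le, mul_one_div_cancel hq0', Real.rpow_one]
    calc d * S ^ (1/q) = (d ^ q * S) ^ (1/q) := by
          rw [Real.mul_rpow (Real.rpow_nonneg hd0.le q) hS0, h1]
      _ ≤ (∑ i ∈ Finset.range (n+1), ‖f i‖ ^ q) ^ (1/q) :=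
          Real.rpow_le_rpow (mul_nonneg (Real.rpow_nonneg hd0.le q) hS0) hsum_lb
            (by positivity)
      _ ≤ ‖∑ i ∈ Finset.range (n+1), f i‖ := hconc'
      _ ≤ Ks * Real.exp n * ‖x‖ := hnorm
  have hfinal : Real.exp n * S ^ (1/q) ≤ Real.exp n * (28 * Ks * s * ‖x‖) := by
    have h2 := mul_le_mul_of_nonneg_left hkey2 (by positivity : (0:ℝ) ≤ 28 * s)
    calc Real.exp n * S ^ (1/q) = 28 * s * (d * S ^ (1/q)) := by
          rw [hd]; field_simp
      _ ≤ 28 * s * (Ks * Real.exp n * ‖x‖) := h2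
      _ = Real.exp n * (28 * Ks * s * ‖x‖) := by ring
  exact le_of_mul_le_mul_left hfinal (Real.exp_pos n)
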